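/- The second moment of the quenched normalized moment generating function admits the representation E_P[(E^ω_{o,o}[e^{⟨θ,X_N⟩}])^2]/φ(θ)^{2N} = Ê^θ⊗Ê^θ[ exp( Σ_{i=0}^{N−1} 1{X_i = Y_i} V(X_{i+1}−X_i, Y_{i+1}−Y_i) ) ], where V(x,y) = log( E_P[π_{0,1}(0,x) π_{0,1}(0,y)] / (q(x) q(y)) ) and X, Y are independent walks with step law q^θ. -/

import Mathlib

open MeasureTheory ProbabilityTheory Filter

def unitVecs (d : ℕ) : Finset (Fin d → ℤ) :=
  Finset.image
    (fun p : Fin d × Bool => fun i => if i = p.1 then (if p.2 then 1 else -1) else 0)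
    Finset.univ

noncomputable def phiFn {d : ℕ} (q : (Fin d → ℤ) → ℝ) (θ : Fin d → ℝ) : ℝ :=
  ∑ z ∈ unitVecs d, q z * Real.exp (∑ i, θ i * (z i : ℝ))

set_option linter.unusedSectionVars false
set_option maxHeartbeats 1000000

section Aux

variable {d : ℕ} {Ω : Type*} [MeasureSpace Ω] [IsProbabilityMeasure (ℙ : Measure Ω)]
  {π : Ω → ℤ → (Fin d → ℤ) → (Fin d → ℤ) → ℝ}

lemma hm_eval (hmeas : Measurable π) (m : ℤ) (x y : Fin d → ℤ) :
    Measurable fun ω => π ω m x y :=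
  ((hmeas.eval (a := m)).eval (a := x)).eval (a := y)

lemma pi_le_one (hpos : ∀ ω m x y, 0 ≤ π ω m x y)
    (hsum1 : ∀ ω m x, ∑ z ∈ unitVecs d, π ω m x (x + z) = 1)
    (ω : Ω) (m : ℤ) (x : Fin d → ℤ) {z : Fin d → ℤ} (hz : z ∈ unitVecs d) :
    π ω m x (x + z) ≤ 1 := by
  rw [← hsum1 ω m x]
  exact Finset.single_le_sum (fun w _ => hpos ω m x (x + w)) hz

lemma integrable_of_bounds {f : Ω → ℝ} (hf : Measurable f)
    (h0 : ∀ ω, 0 ≤ f ω) (h1 : ∀ ω, f ω ≤ 1) : Integrable f ℙ := by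
  refine (integrable_const (1:ℝ)).mono' hf.aestronglyMeasurable (ae_of_all _ fun ω => ?_)
  rw [Real.norm_eq_abs, abs_of_nonneg (h0 ω)]; exact h1 ω

lemma int_single (hmeas : Measurable π) (hpos : ∀ ω m x y, 0 ≤ π ω m x y)
    (hsum1 : ∀ ω m x, ∑ z ∈ unitVecs d, π ω m x (x + z) = 1)
    (m : ℤ) (x : Fin d → ℤ) {z : Fin d → ℤ} (hz : z ∈ unitVecs d) :
    Integrable (fun ω => π ω m x (x + z)) ℙ :=
  integrable_of_bounds (hm_eval hmeas _ _ _) (fun ω => hpos ω m x _)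
    (fun ω => pi_le_one hpos hsum1 ω m x hz)

lemma single_site (hmeas : Measurable π) (hpos : ∀ ω m x y, 0 ≤ π ω m x y)
    (hsum1 : ∀ ω m x, ∑ z ∈ unitVecs d, π ω m x (x + z) = 1)
    (hindep : iIndepFun (m := fun _ => inferInstance)
      (fun (p : ℤ × (Fin d → ℤ)) (ω : Ω) (z : Fin d → ℤ) => π ω p.1 p.2 (p.2 + z)) ℙ)
    (hident : ∀ (m : ℤ) (x : Fin d → ℤ),
      IdentDistrib (fun ω (z : Fin d → ℤ) => π ω m x (x + z))
        (fun ω (z : Fin d → ℤ) => π ω 0 0 z) ℙ ℙ)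
    (q : (Fin d → ℤ) → ℝ) (hq : ∀ z, q z = ∫ ω, π ω 0 0 z ∂ℙ)
    (m : ℤ) (x y : Fin d → ℤ) {z w : Fin d → ℤ}
    (hz : z ∈ unitVecs d) (hw : w ∈ unitVecs d) :
    ∫ ω, π ω m x (x + z) * π ω m y (y + w) ∂ℙ
      = if x = y then ∫ ω, π ω 0 0 z * π ω 0 0 w ∂ℙ else q z * q w := by
  have hf_meas : ∀ p : ℤ × (Fin d → ℤ),
      Measurable (fun (ω : Ω) (u : Fin d → ℤ) => π ω p.1 p.2 (p.2 + u)) :=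
    fun p => measurable_pi_lambda _ fun u => hm_eval hmeas _ _ _
  by_cases hxy : x = y
  · subst hxy
    simp only [if_pos rfl]
    have hd : IdentDistrib (fun ω => π ω m x (x + z) * π ω m x (x + w))
        (fun ω => π ω 0 0 z * π ω 0 0 w) ℙ ℙ :=
      (hident m x).comp ((measurable_pi_apply z).mul (measurable_pi_apply w))
    exact hd.integral_eq
  · rw [if_neg hxy]
    have hne : (m, x) ≠ (m, y) := by simp [hxy]
    have hIF := hindep.indepFun hne
    have hIF2 : IndepFun (fun ω => π ω m x (x + z)) (fun ω => π ω m y (y + w)) ℙ :=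
      hIF.comp (measurable_pi_apply z) (measurable_pi_apply w)
    have e0 : ∫ ω, π ω m x (x + z) * π ω m y (y + w) ∂ℙ
        = (∫ ω, π ω m x (x + z) ∂ℙ) * ∫ ω, π ω m y (y + w) ∂ℙ :=
      hIF2.integral_fun_mul_eq_mul_integral (int_single hmeas hpos hsum1 m x hz).aestronglyMeasurable
        (int_single hmeas hpos hsum1 m y hw).aestronglyMeasurable
    rw [e0]
    have e1 : ∫ ω, π ω m x (x + z) ∂ℙ = q z := by
      rw [hq]; exact ((hident m x).comp (measurable_pi_apply z)).integral_eq
    have e2 : ∫ ω, π ω m y (y + w) ∂ℙ = q w := by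
      rw [hq]; exact ((hident m y).comp (measurable_pi_apply w)).integral_eq
    rw [e1, e2]


lemma int_prod_pair (hmeas : Measurable π) (hpos : ∀ ω m x y, 0 ≤ π ω m x y)
    (hsum1 : ∀ ω m x, ∑ z ∈ unitVecs d, π ω m x (x + z) = 1)
    (N : ℕ) (a b p r : Fin N → (Fin d → ℤ))
    (ha : ∀ i, a i ∈ unitVecs d) (hb : ∀ i, b i ∈ unitVecs d) :
    Integrable (fun ω => ∏ i : Fin N,
      π ω ((i : ℕ) : ℤ) (p i) (p i + a i) * π ω ((i : ℕ) : ℤ) (r i) (r i + b i)) ℙ := by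
  refine integrable_of_bounds ?_ ?_ ?_
  · exact Finset.measurable_prod _ fun i _ =>
      (hm_eval hmeas _ _ _).mul (hm_eval hmeas _ _ _)
  · exact fun ω => Finset.prod_nonneg fun i _ =>
      mul_nonneg (hpos ω _ _ _) (hpos ω _ _ _)
  · exact fun ω => Finset.prod_le_one
      (fun i _ => mul_nonneg (hpos ω _ _ _) (hpos ω _ _ _))
      (fun i _ => mul_le_one₀ (pi_le_one hpos hsum1 ω _ _ (ha i))
        (hpos ω _ _ _) (pi_le_one hpos hsum1 ω _ _ (hb i)))

lemma core (hmeas : Measurable π) (hpos : ∀ ω m x y, 0 ≤ π ω m x y)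
    (hsum1 : ∀ ω m x, ∑ z ∈ unitVecs d, π ω m x (x + z) = 1)
    (hindep : iIndepFun (m := fun _ => inferInstance)
      (fun (p : ℤ × (Fin d → ℤ)) (ω : Ω) (z : Fin d → ℤ) => π ω p.1 p.2 (p.2 + z)) ℙ)
    (hident : ∀ (m : ℤ) (x : Fin d → ℤ),
      IdentDistrib (fun ω (z : Fin d → ℤ) => π ω m x (x + z))
        (fun ω (z : Fin d → ℤ) => π ω 0 0 z) ℙ ℙ)
    (q : (Fin d → ℤ) → ℝ) (hq : ∀ z, q z = ∫ ω, π ω 0 0 z ∂ℙ) :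
    ∀ (N : ℕ) (a b p r : Fin N → (Fin d → ℤ)),
      (∀ i, a i ∈ unitVecs d) → (∀ i, b i ∈ unitVecs d) →
      ∫ ω, (∏ i : Fin N,
          π ω ((i : ℕ) : ℤ) (p i) (p i + a i) * π ω ((i : ℕ) : ℤ) (r i) (r i + b i)) ∂ℙ
        = ∏ i : Fin N, (if p i = r i
            then ∫ ω, π ω 0 0 (a i) * π ω 0 0 (b i) ∂ℙ
            else q (a i) * q (b i)) := by
  have hf_meas : ∀ s : ℤ × (Fin d → ℤ),
      Measurable (fun (ω : Ω) (u : Fin d → ℤ) => π ω s.1 s.2 (s.2 + u)) :=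
    fun s => measurable_pi_lambda _ fun u => hm_eval hmeas _ _ _
  intro N
  induction N with
  | zero => intro a b p r _ _; simp
  | succ N ih =>
    intro a b p r ha hb
    -- split off the last factor
    have hsplit : ∀ ω : Ω, (∏ i : Fin (N+1),
        π ω ((i : ℕ) : ℤ) (p i) (p i + a i) * π ω ((i : ℕ) : ℤ) (r i) (r i + b i))
        = (∏ i : Fin N,
            π ω ((i : ℕ) : ℤ) (p i.castSucc) (p i.castSucc + a i.castSucc)
              * π ω ((i : ℕ) : ℤ) (r i.castSucc) (r i.castSucc + b i.castSucc))
          * (π ω ((N : ℕ) : ℤ) (p (Fin.last N)) (p (Fin.last N) + a (Fin.last N))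
              * π ω ((N : ℕ) : ℤ) (r (Fin.last N)) (r (Fin.last N) + b (Fin.last N))) := by
      intro ω
      rw [Fin.prod_univ_castSucc]
      rfl
    simp only [hsplit]
    -- independence of the first block and the last factor
    set S : Finset (ℤ × (Fin d → ℤ)) :=
      ((Finset.range N).image (fun k : ℕ => (k : ℤ))) ×ˢ
        ((Finset.univ.image p) ∪ (Finset.univ.image r)) with hS
    set T : Finset (ℤ × (Fin d → ℤ)) :=
      {((N : ℤ), p (Fin.last N)), ((N : ℤ), r (Fin.last N))} with hT
    have hST : Disjoint S T := by
      rw [Finset.disjoint_left]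
      intro s hs hsT
      rw [hS, Finset.mem_product] at hs
      obtain ⟨k, hk, hks⟩ := Finset.mem_image.1 hs.1
      rw [Finset.mem_range] at hk
      have hsN : s.1 = (N : ℤ) := by
        rw [hT] at hsT
        rcases Finset.mem_insert.1 hsT with h | h
        · rw [h]
        · rw [Finset.mem_singleton.1 h]
      omega
    have memS1 : ∀ i : Fin N, (((i : ℕ) : ℤ), p i.castSucc) ∈ S := by
      intro i
      rw [hS, Finset.mem_product]
      exact ⟨Finset.mem_image.2 ⟨(i : ℕ), Finset.mem_range.2 i.isLt, rfl⟩,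
        Finset.mem_union_left _ (Finset.mem_image_of_mem p (Finset.mem_univ _))⟩
    have memS2 : ∀ i : Fin N, (((i : ℕ) : ℤ), r i.castSucc) ∈ S := by
      intro i
      rw [hS, Finset.mem_product]
      exact ⟨Finset.mem_image.2 ⟨(i : ℕ), Finset.mem_range.2 i.isLt, rfl⟩,
        Finset.mem_union_right _ (Finset.mem_image_of_mem r (Finset.mem_univ _))⟩
    have memT1 : (((N : ℕ) : ℤ), p (Fin.last N)) ∈ T := by
      rw [hT]; exact Finset.mem_insert_self _ _
    have memT2 : (((N : ℕ) : ℤ), r (Fin.last N)) ∈ T := by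
      rw [hT]; exact Finset.mem_insert_of_mem (Finset.mem_singleton_self _)
    have hIFfin := hindep.indepFun_finset S T hST hf_meas
    have mφS : Measurable (fun v : S → ((Fin d → ℤ) → ℝ) =>
        ∏ i : Fin N, v ⟨(((i : ℕ) : ℤ), p i.castSucc), memS1 i⟩ (a i.castSucc)
          * v ⟨(((i : ℕ) : ℤ), r i.castSucc), memS2 i⟩ (b i.castSucc)) :=
      Finset.measurable_prod _ fun i _ =>
        ((measurable_pi_apply _).comp (measurable_pi_apply _)).fun_mul
          ((measurable_pi_apply _).comp (measurable_pi_apply _))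
    have mφT : Measurable (fun v : T → ((Fin d → ℤ) → ℝ) =>
        v ⟨(((N : ℕ) : ℤ), p (Fin.last N)), memT1⟩ (a (Fin.last N))
          * v ⟨(((N : ℕ) : ℤ), r (Fin.last N)), memT2⟩ (b (Fin.last N))) :=
      ((measurable_pi_apply _).comp (measurable_pi_apply _)).fun_mul
        ((measurable_pi_apply _).comp (measurable_pi_apply _))
    have hIF : IndepFun
        (fun ω => ∏ i : Fin N,
          π ω ((i : ℕ) : ℤ) (p i.castSucc) (p i.castSucc + a i.castSucc)
            * π ω ((i : ℕ) : ℤ) (r i.castSucc) (r i.castSucc + b i.castSucc))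
        (fun ω => π ω ((N : ℕ) : ℤ) (p (Fin.last N)) (p (Fin.last N) + a (Fin.last N))
            * π ω ((N : ℕ) : ℤ) (r (Fin.last N)) (r (Fin.last N) + b (Fin.last N))) ℙ :=
      hIFfin.comp mφS mφT
    have intG := int_prod_pair hmeas hpos hsum1 N
      (fun i => a i.castSucc) (fun i => b i.castSucc)
      (fun i => p i.castSucc) (fun i => r i.castSucc)
      (fun i => ha i.castSucc) (fun i => hb i.castSucc)
    have intH : Integrable (fun ω =>
        π ω ((N : ℕ) : ℤ) (p (Fin.last N)) (p (Fin.last N) + a (Fin.last N))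
          * π ω ((N : ℕ) : ℤ) (r (Fin.last N)) (r (Fin.last N) + b (Fin.last N))) ℙ :=
      integrable_of_bounds ((hm_eval hmeas _ _ _).mul (hm_eval hmeas _ _ _))
        (fun ω => mul_nonneg (hpos ω _ _ _) (hpos ω _ _ _))
        (fun ω => mul_le_one₀ (pi_le_one hpos hsum1 ω _ _ (ha _))
          (hpos ω _ _ _) (pi_le_one hpos hsum1 ω _ _ (hb _)))
    have e0 : ∫ ω, (∏ i : Fin N,
          π ω ((i : ℕ) : ℤ) (p i.castSucc) (p i.castSucc + a i.castSucc)
            * π ω ((i : ℕ) : ℤ) (r i.castSucc) (r i.castSucc + b i.castSucc))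
        * (π ω ((N : ℕ) : ℤ) (p (Fin.last N)) (p (Fin.last N) + a (Fin.last N))
            * π ω ((N : ℕ) : ℤ) (r (Fin.last N)) (r (Fin.last N) + b (Fin.last N))) ∂ℙ
        = (∫ ω, ∏ i : Fin N,
            π ω ((i : ℕ) : ℤ) (p i.castSucc) (p i.castSucc + a i.castSucc)
              * π ω ((i : ℕ) : ℤ) (r i.castSucc) (r i.castSucc + b i.castSucc) ∂ℙ)
          * ∫ ω, π ω ((N : ℕ) : ℤ) (p (Fin.last N)) (p (Fin.last N) + a (Fin.last N))
              * π ω ((N : ℕ) : ℤ) (r (Fin.last N)) (r (Fin.last N) + b (Fin.last N)) ∂ℙ :=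
      hIF.integral_fun_mul_eq_mul_integral intG.aestronglyMeasurable intH.aestronglyMeasurable
    rw [e0, ih (fun i => a i.castSucc) (fun i => b i.castSucc)
        (fun i => p i.castSucc) (fun i => r i.castSucc)
        (fun i => ha i.castSucc) (fun i => hb i.castSucc),
      single_site hmeas hpos hsum1 hindep hident q hq ((N : ℕ) : ℤ)
        (p (Fin.last N)) (r (Fin.last N)) (ha _) (hb _),
      Fin.prod_univ_castSucc]

lemma sq_int {ι : Type*} [Fintype ι] (G : ι → Ω → ℝ) (E : ι → ℝ)
    (hGmeas : ∀ σ, Measurable (G σ)) (hG0 : ∀ σ ω, 0 ≤ G σ ω) (hG1 : ∀ σ ω, G σ ω ≤ 1) :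
    ∫ ω, (∑ σ, G σ ω * E σ)^2 ∂ℙ = ∑ σ, ∑ τ, (∫ ω, G σ ω * G τ ω ∂ℙ) * (E σ * E τ) := by
  have hint : ∀ σ τ : ι, Integrable (fun ω => G σ ω * G τ ω * (E σ * E τ)) ℙ :=
    fun σ τ => (integrable_of_bounds ((hGmeas σ).mul (hGmeas τ))
      (fun ω => mul_nonneg (hG0 σ ω) (hG0 τ ω))
      (fun ω => mul_le_one₀ (hG1 σ ω) (hG0 τ ω) (hG1 τ ω))).mul_const _
  simp_rw [sq, Finset.sum_mul_sum, mul_mul_mul_comm]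
  rw [integral_finset_sum _ (fun σ _ => integrable_finset_sum _ (fun τ _ => hint σ τ))]
  refine Finset.sum_congr rfl fun σ _ => ?_
  rw [integral_finset_sum _ (fun τ _ => hint σ τ)]
  exact Finset.sum_congr rfl fun τ _ => integral_mul_const _ _

end Aux

/-- The normalized quenched expectation
`u^θ_{n+k}(ω, n, x) = E^ω_{n,x}[ e^{⟨θ, X_{n+k} - X_n⟩} ] e^{-k log φ(θ)}`,
written as an explicit sum over nearest-neighbor paths of length `k` started at
position `x` at time `n`, where `π m y y'` is the (quenched) probability of
jumping from `y` at time `m` to `y'` at time `m+1`, and `lphi` plays the role of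
`log φ(θ)`. -/
noncomputable def qExp {d : ℕ} (π : ℤ → (Fin d → ℤ) → (Fin d → ℤ) → ℝ)
    (θ : Fin d → ℝ) (lphi : ℝ) (k : ℕ) (n : ℤ) (x : Fin d → ℤ) : ℝ :=
  ∑ σ : Fin k → (unitVecs d),
    (∏ i : Fin k,
      π (n + (i : ℕ)) (x + ∑ j ∈ Finset.univ.filter (fun j => j < i), (σ j : Fin d → ℤ))
        (x + ∑ j ∈ Finset.univ.filter (fun j => j ≤ i), (σ j : Fin d → ℤ)))
    * Real.exp ((∑ l, θ l * (((∑ j, (σ j : Fin d → ℤ)) l : ℤ) : ℝ)) - k * lphi)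

lemma filter_le_sum {d k : ℕ} (σ : Fin k → (unitVecs d)) (i : Fin k) :
    ∑ j ∈ Finset.univ.filter (fun j => j ≤ i), (σ j : Fin d → ℤ)
      = (∑ j ∈ Finset.univ.filter (fun j => j < i), (σ j : Fin d → ℤ)) + (σ i : Fin d → ℤ) := by
  have h : Finset.univ.filter (fun j => j ≤ i)
      = insert i (Finset.univ.filter (fun j => j < i)) := by
    ext j
    simp only [Finset.mem_filter, Finset.mem_univ, true_and, Finset.mem_insert]
    rw [le_iff_lt_or_eq]
    tauto
  rw [h, Finset.sum_insert (by simp)]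
  exact add_comm _ _

theorem stmt12 {d : ℕ} (c : ℝ) (hc : 0 < c)
    {Ω : Type*} [MeasureSpace Ω] [IsProbabilityMeasure (ℙ : Measure Ω)]
    (π : Ω → ℤ → (Fin d → ℤ) → (Fin d → ℤ) → ℝ) (hmeas : Measurable π)
    (hell : ∀ ω m x, ∀ z ∈ unitVecs d, c ≤ π ω m x (x + z))
    (hpos : ∀ ω m x y, 0 ≤ π ω m x y)
    (hsum1 : ∀ ω m x, ∑ z ∈ unitVecs d, π ω m x (x + z) = 1)
    (hindep : iIndepFun (m := fun _ => inferInstance)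
      (fun (p : ℤ × (Fin d → ℤ)) (ω : Ω) (z : Fin d → ℤ) => π ω p.1 p.2 (p.2 + z)) ℙ)
    (hident : ∀ (m : ℤ) (x : Fin d → ℤ),
      IdentDistrib (fun ω (z : Fin d → ℤ) => π ω m x (x + z))
        (fun ω (z : Fin d → ℤ) => π ω 0 0 z) ℙ ℙ)
    (q : (Fin d → ℤ) → ℝ) (hq : ∀ z, q z = ∫ ω, π ω 0 0 z ∂ℙ)
    (θ : Fin d → ℝ) (N : ℕ) :
    ∫ ω, (qExp (π ω) θ (Real.log (phiFn q θ)) N 0 0) ^ 2 ∂ℙ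
      = ∑ σ : Fin N → (unitVecs d), ∑ τ : Fin N → (unitVecs d),
          (∏ i : Fin N,
            (q (σ i) * Real.exp (∑ l, θ l * (((σ i : Fin d → ℤ) l : ℤ) : ℝ)) / phiFn q θ)
              * (q (τ i) * Real.exp (∑ l, θ l * (((τ i : Fin d → ℤ) l : ℤ) : ℝ)) / phiFn q θ))
          * Real.exp (∑ i : Fin N,
              if (∑ j ∈ Finset.univ.filter (fun j => j < i), (σ j : Fin d → ℤ))
                  = (∑ j ∈ Finset.univ.filter (fun j => j < i), (τ j : Fin d → ℤ))
              then Real.log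
                ((∫ ω, π ω 0 0 (σ i) * π ω 0 0 (τ i) ∂ℙ) / (q (σ i) * q (τ i)))
              else 0) := by
  classical
  rcases (unitVecs d).eq_empty_or_nonempty with he | hne
  · rcases Nat.eq_zero_or_pos N with rfl | hN
    · simp [qExp]
    · haveI : IsEmpty ((unitVecs d) : Finset (Fin d → ℤ)) :=
        ⟨fun x => by simpa [he] using x.2⟩
      haveI : IsEmpty (Fin N → (unitVecs d)) := ⟨fun σ => IsEmpty.false (σ ⟨0, hN⟩)⟩
      simp [qExp]
  · -- main branch
    have hqz : ∀ z ∈ unitVecs d, 0 < q z := by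
      intro z hz
      have hint : Integrable (fun ω => π ω 0 0 z) ℙ := by
        simpa using int_single hmeas hpos hsum1 0 0 hz
      have hle : (c : ℝ) ≤ ∫ ω, π ω 0 0 z ∂ℙ := by
        calc c = ∫ _ : Ω, c ∂ℙ := by simp
          _ ≤ _ := integral_mono (integrable_const c) hint
                (fun ω => by simpa using hell ω 0 0 z hz)
      rw [hq]; linarith
    have hφ : 0 < phiFn q θ :=
      Finset.sum_pos (fun z hz => mul_pos (hqz z hz) (Real.exp_pos _)) hne
    have hIpos : ∀ z w : Fin d → ℤ, z ∈ unitVecs d → w ∈ unitVecs d →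
        0 < ∫ ω, π ω 0 0 z * π ω 0 0 w ∂ℙ := by
      intro z w hz hw
      have h1 : ∀ ω : Ω, π ω 0 0 z ≤ 1 := fun ω => by
        simpa using pi_le_one hpos hsum1 ω 0 0 hz
      have h1w : ∀ ω : Ω, π ω 0 0 w ≤ 1 := fun ω => by
        simpa using pi_le_one hpos hsum1 ω 0 0 hw
      have hint : Integrable (fun ω => π ω 0 0 z * π ω 0 0 w) ℙ :=
        integrable_of_bounds ((hm_eval hmeas _ _ _).mul (hm_eval hmeas _ _ _))
          (fun ω => mul_nonneg (hpos _ _ _ _) (hpos _ _ _ _))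
          (fun ω => mul_le_one₀ (h1 ω) (hpos _ _ _ _) (h1w ω))
      have hcc : c * c ≤ ∫ ω, π ω 0 0 z * π ω 0 0 w ∂ℙ := by
        calc c * c = ∫ _ : Ω, c * c ∂ℙ := by simp
          _ ≤ _ := integral_mono (integrable_const _) hint (fun ω =>
              mul_le_mul (by simpa using hell ω 0 0 z hz)
                (by simpa using hell ω 0 0 w hw) hc.le (hpos _ _ _ _))
      nlinarith
    have hqe : ∀ ω : Ω, qExp (π ω) θ (Real.log (phiFn q θ)) N 0 0
        = ∑ σ : Fin N → (unitVecs d),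
            (∏ i : Fin N, π ω ((i : ℕ) : ℤ)
              (∑ j ∈ Finset.univ.filter (fun j => j < i), (σ j : Fin d → ℤ))
              ((∑ j ∈ Finset.univ.filter (fun j => j < i), (σ j : Fin d → ℤ))
                + (σ i : Fin d → ℤ)))
            * Real.exp ((∑ l, θ l * (((∑ j, (σ j : Fin d → ℤ)) l : ℤ) : ℝ))
                - N * Real.log (phiFn q θ)) := by
      intro ω
      unfold qExp
      refine Finset.sum_congr rfl fun σ _ => ?_
      congr 1
      refine Finset.prod_congr rfl fun i _ => ?_
      rw [filter_le_sum σ i]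
      simp only [zero_add]
    simp only [hqe]
    rw [sq_int
      (fun (σ : Fin N → (unitVecs d)) ω => ∏ i : Fin N, π ω ((i : ℕ) : ℤ)
          (∑ j ∈ Finset.univ.filter (fun j => j < i), (σ j : Fin d → ℤ))
          ((∑ j ∈ Finset.univ.filter (fun j => j < i), (σ j : Fin d → ℤ))
            + (σ i : Fin d → ℤ)))
      (fun σ => Real.exp ((∑ l, θ l * (((∑ j, (σ j : Fin d → ℤ)) l : ℤ) : ℝ))
          - N * Real.log (phiFn q θ)))
      (fun σ => Finset.measurable_prod _ fun i _ => hm_eval hmeas _ _ _)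
      (fun σ ω => Finset.prod_nonneg fun i _ => hpos _ _ _ _)
      (fun σ ω => Finset.prod_le_one (fun i _ => hpos _ _ _ _)
        (fun i _ => pi_le_one hpos hsum1 ω _ _ (σ i).2))]
    refine Finset.sum_congr rfl fun σ _ => ?_
    refine Finset.sum_congr rfl fun τ _ => ?_
    -- compute the integral of the product of the two path-products
    have hprod : ∀ ω : Ω,
        (∏ i : Fin N, π ω ((i : ℕ) : ℤ)
          (∑ j ∈ Finset.univ.filter (fun j => j < i), (σ j : Fin d → ℤ))
          ((∑ j ∈ Finset.univ.filter (fun j => j < i), (σ j : Fin d → ℤ))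
            + (σ i : Fin d → ℤ)))
        * (∏ i : Fin N, π ω ((i : ℕ) : ℤ)
          (∑ j ∈ Finset.univ.filter (fun j => j < i), (τ j : Fin d → ℤ))
          ((∑ j ∈ Finset.univ.filter (fun j => j < i), (τ j : Fin d → ℤ))
            + (τ i : Fin d → ℤ)))
        = ∏ i : Fin N,
            π ω ((i : ℕ) : ℤ)
              (∑ j ∈ Finset.univ.filter (fun j => j < i), (σ j : Fin d → ℤ))
              ((∑ j ∈ Finset.univ.filter (fun j => j < i), (σ j : Fin d → ℤ))
                + (σ i : Fin d → ℤ))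
            * π ω ((i : ℕ) : ℤ)
              (∑ j ∈ Finset.univ.filter (fun j => j < i), (τ j : Fin d → ℤ))
              ((∑ j ∈ Finset.univ.filter (fun j => j < i), (τ j : Fin d → ℤ))
                + (τ i : Fin d → ℤ)) :=
      fun ω => (Finset.prod_mul_distrib).symm
    simp only [hprod]
    have hcore := core hmeas hpos hsum1 hindep hident q hq N
      (fun i => (σ i : Fin d → ℤ)) (fun i => (τ i : Fin d → ℤ))
      (fun i => ∑ j ∈ Finset.univ.filter (fun j => j < i), (σ j : Fin d → ℤ))
      (fun i => ∑ j ∈ Finset.univ.filter (fun j => j < i), (τ j : Fin d → ℤ))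
      (fun i => (σ i).2) (fun i => (τ i).2)
    beta_reduce at hcore
    rw [hcore]
    have hEfac : ∀ (ρ : Fin N → (unitVecs d)),
        Real.exp ((∑ l, θ l * (((∑ j, (ρ j : Fin d → ℤ)) l : ℤ) : ℝ))
            - N * Real.log (phiFn q θ))
        = (∏ i : Fin N, Real.exp (∑ l, θ l * (((ρ i : Fin d → ℤ) l : ℤ) : ℝ)))
            / phiFn q θ ^ N := by
      intro ρ
      have h1 : (∑ l, θ l * (((∑ j, (ρ j : Fin d → ℤ)) l : ℤ) : ℝ))
          = ∑ i : Fin N, ∑ l, θ l * (((ρ i : Fin d → ℤ) l : ℤ) : ℝ) := by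
        simp only [Finset.sum_apply, Int.cast_sum, Finset.mul_sum]
        exact Finset.sum_comm
      rw [h1, Real.exp_sub, Real.exp_sum, Real.exp_nat_mul, Real.exp_log hφ]
    rw [hEfac σ, hEfac τ, div_mul_div_comm, ← Finset.prod_mul_distrib, ← mul_pow,
      show ((phiFn q θ * phiFn q θ) ^ N = ∏ _i : Fin N, (phiFn q θ * phiFn q θ)) from by
        rw [Finset.prod_const, Finset.card_univ, Fintype.card_fin],
      ← Finset.prod_div_distrib, ← Finset.prod_mul_distrib,
      Real.exp_sum, ← Finset.prod_mul_distrib]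
    refine Finset.prod_congr rfl fun i _ => ?_
    by_cases hcond : (∑ j ∈ Finset.univ.filter (fun j => j < i), (σ j : Fin d → ℤ))
        = (∑ j ∈ Finset.univ.filter (fun j => j < i), (τ j : Fin d → ℤ))
    · rw [if_pos hcond, if_pos hcond,
        Real.exp_log (div_pos (hIpos _ _ (σ i).2 (τ i).2)
          (mul_pos (hqz _ (σ i).2) (hqz _ (τ i).2)))]
      have h1 : q (σ i) ≠ 0 := (hqz _ (σ i).2).ne'
      have h2 : q (τ i) ≠ 0 := (hqz _ (τ i).2).ne'
      have h3 : phiFn q θ ≠ 0 := hφ.ne'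
      field_simp
    · rw [if_neg hcond, if_neg hcond, Real.exp_zero]
      ring
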